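/- Every elementary lattice triangle with base of lattice length n and height n has normalized area n², and the cone over an elementary triangle with base AB of lattice length n and apex O at lattice distance n corresponds to the quotient singularity ℂ²/(ℤ/n²ℤ) with weights (1, an-1) for some a coprime to n; in particular the index of the sublattice of ℤ² generated by the primitive generators of the two rays OA, OB of the cone is n². -/

import Mathlib

/-- The determinant `det(v, w) = v₁w₂ - v₂w₁` of two vectors in `ℤ²`. -/
def det2 (v w : ℤ × ℤ) : ℤ := v.1 * w.2 - v.2 * w.1

section Aux

/-- Cramer's rule for a basis `v, t` of determinant `1`. -/
lemma det2_cramer {v t : ℤ × ℤ} (h : det2 v t = 1) (z : ℤ × ℤ) :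
    (det2 z t) • v + (det2 v z) • t = z := by
  simp only [det2] at *
  have h1 : (z.1 * t.2 - z.2 * t.1) * v.1 + (v.1 * z.2 - v.2 * z.1) * t.1 = z.1 := by
    linear_combination z.1 * h
  have h2 : (z.1 * t.2 - z.2 * t.1) * v.2 + (v.1 * z.2 - v.2 * z.1) * t.2 = z.2 := by
    linear_combination z.2 * h
  ext
  · simpa using h1
  · simpa using h2

/-- The additive automorphism of `ℤ²` sending the standard basis to a basis `v, t`
of determinant `1`. -/
noncomputable def detOneEquiv {v t : ℤ × ℤ} (h : det2 v t = 1) : (ℤ × ℤ) ≃+ (ℤ × ℤ) where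
  toFun p := p.1 • v + p.2 • t
  invFun z := (det2 z t, det2 v z)
  left_inv p := by
    have h' : v.1 * t.2 - v.2 * t.1 = 1 := h
    ext
    · simp only [det2, Prod.fst_add, Prod.smul_fst, Prod.snd_add, Prod.smul_snd, smul_eq_mul]
      linear_combination p.1 * h'
    · simp only [det2, Prod.fst_add, Prod.smul_fst, Prod.snd_add, Prod.smul_snd, smul_eq_mul]
      linear_combination p.2 * h'
  right_inv z := det2_cramer h z
  map_add' p q := by
    ext <;> simp [Prod.ext_iff, smul_eq_mul] <;> ring

lemma closure_pair_eq {m : ℤ} :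
    (AddSubgroup.closure {((1 : ℤ), (0 : ℤ)), ((0 : ℤ), m)} : AddSubgroup (ℤ × ℤ)) =
      (⊤ : AddSubgroup ℤ).prod (AddSubgroup.zmultiples m) := by
  apply le_antisymm
  · rw [AddSubgroup.closure_le]
    rintro z (rfl | rfl)
    · exact AddSubgroup.mem_prod.mpr ⟨AddSubgroup.mem_top _, AddSubgroup.zero_mem _⟩
    · exact AddSubgroup.mem_prod.mpr ⟨AddSubgroup.mem_top _, AddSubgroup.mem_zmultiples _⟩
  · rintro ⟨x, y⟩ hz
    rw [AddSubgroup.mem_prod] at hz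
    obtain ⟨-, k, hk⟩ := hz
    have hy : y = k * m := by simpa [smul_eq_mul] using hk.symm
    have : (x, y) = x • ((1 : ℤ), (0 : ℤ)) + k • ((0 : ℤ), m) := by
      simp [Prod.ext_iff, smul_eq_mul, hy]
    rw [this]
    exact AddSubgroup.add_mem _
      (AddSubgroup.zsmul_mem _ (AddSubgroup.subset_closure (by simp)) _)
      (AddSubgroup.zsmul_mem _ (AddSubgroup.subset_closure (by simp)) _)

/-- The index of the subgroup of `ℤ²` generated by `v` and `m • t`, where `v, t`
is a basis of determinant `1`, is `|m|`. -/
lemma index_closure_basis_smul {v t : ℤ × ℤ} (h : det2 v t = 1) (m : ℤ) :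
    (AddSubgroup.closure {v, m • t} : AddSubgroup (ℤ × ℤ)).index = m.natAbs := by
  have he1 : detOneEquiv h (1, 0) = v := by simp [detOneEquiv]
  have he2 : detOneEquiv h (0, m) = m • t := by simp [detOneEquiv]
  have hmap : (AddSubgroup.closure {v, m • t} : AddSubgroup (ℤ × ℤ)) =
      AddSubgroup.map (detOneEquiv h).toAddMonoidHom
        (AddSubgroup.closure {((1 : ℤ), (0 : ℤ)), ((0 : ℤ), m)}) := by
    rw [AddMonoidHom.map_closure]
    congr 1
    rw [Set.image_insert_eq, Set.image_singleton]
    simp [he1, he2]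
  rw [hmap, AddSubgroup.map_equiv_eq_comap_symm']
  rw [AddSubgroup.index_comap_of_surjective _ ((detOneEquiv h).symm.surjective)]
  rw [closure_pair_eq, AddSubgroup.index_prod, AddSubgroup.index_top, Int.index_zmultiples,
    one_mul]

end Aux

/-- An elementary lattice triangle `OAB` with base `AB` of lattice length `n`
and apex `O` at lattice distance `n` from `AB`, whose other two edges `OA`,
`OB` have lattice length `1`, has normalized area `n²`; moreover the index of
the sublattice of `ℤ²` generated by the primitive generators `A - O`, `B - O`
of the two rays of the cone over the triangle is `n²`. -/
theorem elementary_triangle_area_and_index (O A B u : ℤ × ℤ) (n : ℕ)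
    (hu : Int.gcd u.1 u.2 = 1)
    (hAB : B - A = (n : ℤ) • u)
    (hheight : (det2 (A - O) u).natAbs = n)
    (hOA : Int.gcd (A - O).1 (A - O).2 = 1)
    (hOB : Int.gcd (B - O).1 (B - O).2 = 1) :
    (det2 (A - O) (B - O)).natAbs = n ^ 2 ∧
    (AddSubgroup.closure {A - O, B - O} : AddSubgroup (ℤ × ℤ)).index = n ^ 2 := by
  set v := A - O with hv
  set w := B - O with hw
  have hwv : w = v + (n : ℤ) • u := by
    rw [hw, hv, ← hAB]; ring
  -- area part
  have hdet : det2 v w = (n : ℤ) * det2 v u := by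
    rw [hwv]; simp only [det2, Prod.smul_fst, Prod.smul_snd, Prod.fst_add, Prod.snd_add,
      smul_eq_mul]; ring
  have harea : (det2 v w).natAbs = n ^ 2 := by
    rw [hdet, Int.natAbs_mul, Int.natAbs_natCast, hheight, sq]
  refine ⟨harea, ?_⟩
  -- find t with det2 v t = 1
  have hco : IsCoprime v.1 v.2 := Int.isCoprime_iff_gcd_eq_one.mpr hOA
  obtain ⟨x, y, hxy⟩ := hco
  set t : ℤ × ℤ := (-y, x) with ht
  have hvt : det2 v t = 1 := by
    simp only [det2, ht]; linarith [hxy]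
  -- express u in the basis v, t
  set a : ℤ := det2 u t with ha
  set b : ℤ := det2 v u with hb
  have hu' : u = a • v + b • t := (det2_cramer hvt u).symm
  -- rewrite the closure
  have hcl : (AddSubgroup.closure {v, w} : AddSubgroup (ℤ × ℤ)) =
      AddSubgroup.closure {v, ((n : ℤ) * b) • t} := by
    have hw' : w = (1 + (n : ℤ) * a) • v + ((n : ℤ) * b) • t := by
      rw [hwv, hu']; module
    apply le_antisymm <;> rw [AddSubgroup.closure_le]
    · rintro z (rfl | rfl)
      · exact AddSubgroup.subset_closure (by simp)
      · rw [hw']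
        exact AddSubgroup.add_mem _
          (AddSubgroup.zsmul_mem _ (AddSubgroup.subset_closure (by simp)) _)
          (AddSubgroup.subset_closure (by simp))
    · rintro z (rfl | rfl)
      · exact AddSubgroup.subset_closure (by simp)
      · have : ((n : ℤ) * b) • t = w + (-(1 + (n : ℤ) * a)) • v := by
          rw [hw']; module
        rw [this]
        exact AddSubgroup.add_mem _ (AddSubgroup.subset_closure (by simp))
          (AddSubgroup.zsmul_mem _ (AddSubgroup.subset_closure (by simp)) _)
  rw [hcl, index_closure_basis_smul hvt, Int.natAbs_mul, Int.natAbs_natCast, hheight, sq]
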